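/- Let φ = ∃x₁∀x₂∃x₃⋯Qxₙ ψ be a quantified Boolean formula with strictly alternating quantifiers starting with ∃, where ψ is a propositional formula in conjunctive normal form over the variables x₁,…,xₙ. Define f(φ) = (@_s ◇◇⊤) ∧ (@_s ◇□⊥) ∧ @_s◇↓x₁.@_s□↓x₂.⋯@_sQ'↓xₙ. r(ψ), where Q' = ◇ if Q = ∃ and Q' = □ if Q = ∀, and r(ψ) is obtained from ψ by replacing every positive literal x_i by @_{x_i}◇⊤ and every negative literal ¬x_i by @_{x_i}□⊥ (constants unchanged); here s is a nominal and x₁,…,xₙ are state variables. Let K₂ = (W,R,η) be the Kripke structure with W = {s,t}, R = {(s,s),(s,t)} (so (W,R) is a transitive frame) and η(s) = {s} for the nominal s. Then φ evaluates to true if and only if K₂,g,s ⊨ f(φ) for every assignment g. -/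

import Mathlib

/-- Hybrid logic formulas over countable sets of atomic propositions,
nominals and state variables (each indexed by `ℕ`). -/
inductive HForm : Type where
  | prop : ℕ → HForm
  | nom  : ℕ → HForm
  | svar : ℕ → HForm
  | top  : HForm
  | bot  : HForm
  | neg  : HForm → HForm
  | and  : HForm → HForm → HForm
  | or   : HForm → HForm → HForm
  | dia  : HForm → HForm
  | box  : HForm → HForm
  | bind : ℕ → HForm → HForm
  | atN  : ℕ → HForm → HForm
  | atV  : ℕ → HForm → HForm
deriving DecidableEq

/-- A (hybrid) Kripke structure: states, transition relation, labeling of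
propositions by sets of states and of nominals by (single) states. -/
structure Kripke (W : Type) where
  rel : W → W → Prop
  vProp : ℕ → Set W
  vNom : ℕ → W

/-- Update of an assignment: `updAsg g x w` is the `x`-variant of `g` mapping `x` to `w`. -/
def updAsg {W : Type} (g : ℕ → W) (x : ℕ) (w : W) : ℕ → W :=
  fun y => if y = x then w else g y

/-- The satisfaction relation `K, g, w ⊨ φ`. -/
def Sat {W : Type} (K : Kripke W) : (ℕ → W) → W → HForm → Prop
  | _, w, .prop p => w ∈ K.vProp p
  | _, w, .nom i => w = K.vNom i
  | g, w, .svar x => w = g x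
  | _, _, .top => True
  | _, _, .bot => False
  | g, w, .neg φ => ¬ Sat K g w φ
  | g, w, .and φ ψ => Sat K g w φ ∧ Sat K g w ψ
  | g, w, .or φ ψ => Sat K g w φ ∨ Sat K g w ψ
  | g, w, .dia φ => ∃ v, K.rel w v ∧ Sat K g v φ
  | g, w, .box φ => ∀ v, K.rel w v → Sat K g v φ
  | g, w, .bind x φ => Sat K (updAsg g x w) w φ
  | g, _, .atN i φ => Sat K g (K.vNom i) φ
  | g, _, .atV x φ => Sat K g (g x) φ

/-- Satisfiability over the class of all frames. -/
def SatisfiableAll (φ : HForm) : Prop :=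
  ∃ (W : Type) (K : Kripke W) (g : ℕ → W) (w : W), Sat K g w φ

/-- Satisfiability over the class of transitive frames. -/
def SatisfiableTrans (φ : HForm) : Prop :=
  ∃ (W : Type) (K : Kripke W), Transitive K.rel ∧ ∃ (g : ℕ → W) (w : W), Sat K g w φ

/-- Satisfiability over the class of total frames. -/
def SatisfiableTotal (φ : HForm) : Prop :=
  ∃ (W : Type) (K : Kripke W), (∀ w, ∃ v, K.rel w v) ∧ ∃ (g : ℕ → W) (w : W), Sat K g w φ

/-- Satisfiability over the class of ER frames. -/
def SatisfiableER (φ : HForm) : Prop :=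
  ∃ (W : Type) (K : Kripke W), Equivalence K.rel ∧ ∃ (g : ℕ → W) (w : W), Sat K g w φ

/-- The singleton reflexive Kripke structure `K₁` labeling every proposition and
nominal with its unique state. -/
def K1 : Kripke Unit := ⟨fun _ _ => True, fun _ => Set.univ, fun _ => ()⟩

/-- The assignment `g₁` mapping every state variable to the unique state of `K₁`. -/
def g1 : ℕ → Unit := fun _ => ()

/-- Unary operators of hybrid logic: `◇`, `□`, `↓x.`, `@_i` (nominal), `@_x` (state variable). -/
inductive HOp : Type where
  | dia : HOp
  | box : HOp
  | bind : ℕ → HOp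
  | atN : ℕ → HOp
  | atV : ℕ → HOp
deriving DecidableEq

def applyOp : HOp → HForm → HForm
  | .dia, φ => .dia φ
  | .box, φ => .box φ
  | .bind x, φ => .bind x φ
  | .atN i, φ => .atN i φ
  | .atV x, φ => .atV x φ

/-- Apply a sequence of operators to a formula (head of the list outermost). -/
def applyOps : List HOp → HForm → HForm
  | [], φ => φ
  | o :: os, φ => applyOp o (applyOps os φ)

/-- Evaluation of a CNF over `n` variables (a clause is a list of literals; a literal
is a pair of a variable index and a sign, `true` for positive) under an assignment. -/
def evalCNF {n : ℕ} (asg : Fin n → Bool) (cnf : List (List (Fin n × Bool))) : Prop :=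
  ∀ c ∈ cnf, ∃ l ∈ c, asg l.1 = l.2

/-- Truth of a quantified Boolean formula with `m` strictly alternating quantifiers
over the matrix `P`; `q = true` means the outermost quantifier is `∃`. -/
def QTrue : (q : Bool) → (m : ℕ) → ((Fin m → Bool) → Prop) → Prop
  | _, 0, P => P (fun i => i.elim0)
  | true, m + 1, P => ∃ b, QTrue false m (fun asg => P (Fin.cons b asg))
  | false, m + 1, P => ∀ b, QTrue true m (fun asg => P (Fin.cons b asg))

/-- Translation of a literal: the positive literal `x_i` becomes `@_{x_i} ◇⊤` and the
negative literal `¬x_i` becomes `@_{x_i} □⊥` (the variable `x_i` is the state variable `i`). -/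
def trLit {n : ℕ} (l : Fin n × Bool) : HForm :=
  if l.2 then HForm.atV l.1 (HForm.dia HForm.top) else HForm.atV l.1 (HForm.box HForm.bot)

/-- Translation `r` of a clause: the disjunction of the translations of its literals. -/
def trClause {n : ℕ} : List (Fin n × Bool) → HForm
  | [] => HForm.bot
  | [l] => trLit l
  | l :: l' :: ls => HForm.or (trLit l) (trClause (l' :: ls))

/-- Translation `r(ψ)` of a CNF: the conjunction of the translations of its clauses. -/
def trCNF {n : ℕ} : List (List (Fin n × Bool)) → HForm
  | [] => HForm.top
  | [c] => trClause c
  | c :: c' :: cs => HForm.and (trClause c) (trCNF (c' :: cs))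

/-- The quantifier prefix `@_s ◇↓x₁. @_s □↓x₂. ⋯ @_s Q'↓xₙ.` of `f(φ)`, where the
nominal `s` is `0`, the state variable `x_{i+1}` is `i`, and `Q' = ◇` for
existentially (odd position, `i` even) and `□` for universally quantified variables. -/
def qbfPrefix (n : ℕ) : List HOp :=
  (List.finRange n).flatMap (fun i =>
    [HOp.atN 0, if i.val % 2 = 0 then HOp.dia else HOp.box, HOp.bind i.val])

/-- The formula `f(φ) = (@_s ◇◇⊤) ∧ (@_s ◇□⊥) ∧ @_s◇↓x₁.@_s□↓x₂.⋯@_s Q'↓xₙ. r(ψ)`. -/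
def qbfFormula (n : ℕ) (cnf : List (List (Fin n × Bool))) : HForm :=
  HForm.and (HForm.atN 0 (HForm.dia (HForm.dia HForm.top)))
    (HForm.and (HForm.atN 0 (HForm.dia (HForm.box HForm.bot)))
      (applyOps (qbfPrefix n) (trCNF cnf)))

/-- The Kripke structure `K₂` with states `s = false`, `t = true`, transitive
transition relation `{(s,s),(s,t)}`, and the nominal `s` denoting the state `s`. -/
def K2 : Kripke Bool := ⟨fun a _ => a = false, fun _ => Set.univ, fun _ => false⟩


section Aux

lemma trLit_sat {n : ℕ} (g : ℕ → Bool) (w : Bool) (l : Fin n × Bool) :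
    Sat K2 g w (trLit l) ↔ (!(g l.1.val) = l.2) := by
  rcases l with ⟨i, b⟩
  cases b <;> simp [trLit, Sat, K2]

lemma trClause_sat {n : ℕ} (g : ℕ → Bool) (w : Bool) :
    ∀ c : List (Fin n × Bool),
      (Sat K2 g w (trClause c) ↔ ∃ l ∈ c, !(g l.1.val) = l.2)
  | [] => by simp [trClause, Sat]
  | [l] => by simp [trClause, trLit_sat]
  | l :: l' :: ls => by
      simp only [trClause, Sat, trLit_sat, trClause_sat g w (l' :: ls)]
      simp

lemma trCNF_sat {n : ℕ} (g : ℕ → Bool) (w : Bool) :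
    ∀ cnf : List (List (Fin n × Bool)),
      (Sat K2 g w (trCNF cnf) ↔ evalCNF (fun i => !(g i.val)) cnf)
  | [] => by simp [trCNF, Sat, evalCNF]
  | [c] => by simp [trCNF, trClause_sat, evalCNF]
  | c :: c' :: cs => by
      simp only [trCNF, Sat, trClause_sat, trCNF_sat g w (c' :: cs), evalCNF]
      simp

lemma QTrue_congr : ∀ (m : ℕ) (q : Bool) {P Q : (Fin m → Bool) → Prop},
    (∀ a, P a ↔ Q a) → (QTrue q m P ↔ QTrue q m Q)
  | 0, q, P, Q, h => by cases q <;> simpa [QTrue] using h _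
  | m + 1, true, P, Q, h => by
      simp only [QTrue]
      exact exists_congr fun b => QTrue_congr m false fun a => h _
  | m + 1, false, P, Q, h => by
      simp only [QTrue]
      exact forall_congr' fun b => QTrue_congr m true fun a => h _

def blocks : ℕ → ℕ → List HOp
  | _, 0 => []
  | o, m + 1 =>
      HOp.atN 0 :: (if o % 2 = 0 then HOp.dia else HOp.box) :: HOp.bind o ::
        blocks (o + 1) m

lemma finRange_flatMap_blocks : ∀ (m o : ℕ),
    (List.finRange m).flatMap (fun i =>
      [HOp.atN 0, if (i.val + o) % 2 = 0 then HOp.dia else HOp.box,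
        HOp.bind (i.val + o)]) = blocks o m
  | 0, o => by simp [blocks]
  | m + 1, o => by
      rw [List.finRange_succ]
      simp only [List.flatMap_cons, List.flatMap_map]
      have := finRange_flatMap_blocks m (o + 1)
      rw [blocks]
      simp only [Fin.val_zero, Nat.zero_add, Function.comp]
      rw [← this]
      simp only [Fin.val_succ, show ∀ k, k + 1 + o = k + (o + 1) from fun k => by omega,
        List.cons_append, List.nil_append]

lemma qbfPrefix_eq_blocks (n : ℕ) : qbfPrefix n = blocks 0 n := by
  have := finRange_flatMap_blocks n 0
  simpa [qbfPrefix, Nat.add_zero] using this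

lemma blocks_sat (P : (ℕ → Bool) → Prop) (φ : HForm)
    (hφ : ∀ g w, Sat K2 g w φ ↔ P g) :
    ∀ (m o : ℕ) (g : ℕ → Bool) (w : Bool),
      Sat K2 g w (applyOps (blocks o m) φ) ↔
        QTrue (decide (o % 2 = 0)) m (fun asg =>
          P (fun y => if h : o ≤ y ∧ y < o + m then !asg ⟨y - o, by omega⟩ else g y))
  | 0, o, g, w => by
      have hg : (fun y => if h : o ≤ y ∧ y < o + 0 then
          !(fun (i : Fin 0) => i.elim0) ⟨y - o, by omega⟩ else g y) = g := by
        funext y; rw [dif_neg]; omega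
      cases hdec : decide (o % 2 = 0) <;>
        simp only [blocks, applyOps, QTrue, hg, hφ g w]
  | m + 1, o, g, w => by
      have key : ∀ v : Bool,
          Sat K2 (updAsg g o v) v (applyOps (blocks (o + 1) m) φ) ↔
            QTrue (decide ((o + 1) % 2 = 0)) m (fun asg =>
              P (fun y => if h : o + 1 ≤ y ∧ y < o + 1 + m then
                !asg ⟨y - (o + 1), by omega⟩ else updAsg g o v y)) :=
        fun v => blocks_sat P φ hφ m (o + 1) (updAsg g o v) v
      have hfun : ∀ (v : Bool) (asg : Fin m → Bool),
          (fun y => if h : o + 1 ≤ y ∧ y < o + 1 + m then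
              (!asg ⟨y - (o + 1), by omega⟩) else updAsg g o v y)
            = (fun y => if h : o ≤ y ∧ y < o + (m + 1) then
                !(Fin.cons (α := fun _ => Bool) (!v) asg (⟨y - o, by omega⟩ : Fin (m + 1))) else g y) := by
        intro v asg; funext y
        by_cases h1 : o + 1 ≤ y ∧ y < o + 1 + m
        · rw [dif_pos h1, dif_pos (by omega)]
          have he : (⟨y - o, by omega⟩ : Fin (m + 1)) =
              Fin.succ ⟨y - (o + 1), by omega⟩ := by
            apply Fin.ext; simp; omega
          rw [he, Fin.cons_succ]
        · rw [dif_neg h1]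
          by_cases h2 : y = o
          · rw [dif_pos (by omega)]
            have he : (⟨y - o, by omega⟩ : Fin (m + 1)) = 0 := by
              apply Fin.ext; simp; omega
            rw [he, Fin.cons_zero, updAsg]
            simp [h2]
          · rw [dif_neg (by omega), updAsg]
            simp [h2]
      have hkey : ∀ v : Bool,
          Sat K2 (updAsg g o v) v (applyOps (blocks (o + 1) m) φ) ↔
            QTrue (decide ((o + 1) % 2 = 0)) m (fun asg =>
              P (fun y => if h : o ≤ y ∧ y < o + (m + 1) then
                !(Fin.cons (α := fun _ => Bool) (!v) asg (⟨y - o, by omega⟩ : Fin (m + 1))) else g y)) := by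
        intro v
        rw [key v]
        exact QTrue_congr m _ fun asg => by rw [hfun v asg]
      by_cases ho : o % 2 = 0
      · have ho' : ¬ ((o + 1) % 2 = 0) := by omega
        simp only [ho', decide_false] at hkey
        simp only [blocks, if_pos ho, applyOps, applyOp, Sat, K2,
          decide_true, ho, QTrue]
        constructor
        · rintro ⟨v, -, hv⟩
          exact ⟨!v, (hkey v).1 hv⟩
        · rintro ⟨b, hb⟩
          refine ⟨!b, rfl, (hkey (!b)).2 ?_⟩
          simpa using hb
      · have ho' : (o + 1) % 2 = 0 := by omega
        simp only [ho', decide_true] at hkey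
        simp only [blocks, if_neg ho, applyOps, applyOp, Sat, K2,
          decide_false, ho, QTrue]
        constructor
        · intro hv b
          have := (hkey (!b)).1 (hv (!b) rfl)
          simpa using this
        · intro hb v hv
          exact (hkey v).2 (hb (!v))

end Aux

/-- The quantified Boolean formula
`∃x₁∀x₂⋯Qxₙ ψ` (strictly alternating quantifiers, `ψ` in CNF) evaluates to true
iff `K₂, g, s ⊨ f(φ)` for every assignment `g`. -/
theorem qbf_reduction (n : ℕ) (cnf : List (List (Fin n × Bool))) :
    QTrue true n (fun asg => evalCNF asg cnf) ↔
      ∀ g : ℕ → Bool, Sat K2 g false (qbfFormula n cnf) := by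
  have hmain : ∀ g : ℕ → Bool,
      Sat K2 g false (applyOps (qbfPrefix n) (trCNF cnf)) ↔
        QTrue true n (fun asg => evalCNF asg cnf) := by
    intro g
    rw [qbfPrefix_eq_blocks]
    rw [blocks_sat (fun g => evalCNF (fun i => !(g i.val)) cnf) (trCNF cnf)
      (fun g w => trCNF_sat g w cnf) n 0 g false]
    simp only [Nat.zero_mod, decide_true]
    apply QTrue_congr
    intro asg
    have : (fun i : Fin n => !(fun y => if h : 0 ≤ y ∧ y < 0 + n then
        !asg ⟨y - 0, by omega⟩ else g y) i.val) = asg := by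
      funext i
      have hi : 0 ≤ i.val ∧ i.val < 0 + n := ⟨Nat.zero_le _, by omega⟩
      simp [hi]
    rw [this]
  constructor
  · intro h g
    refine ⟨⟨false, rfl, false, rfl, trivial⟩, ⟨true, rfl, fun v hv => by simp [K2] at hv⟩, ?_⟩
    exact (hmain g).2 h
  · intro h
    exact (hmain (fun _ => false)).1 (h (fun _ => false)).2.2
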